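/- Let A ∈ ℝᵐˣⁿ have rank m, H symmetric positive definite on N(A), and P the orthogonal projector onto N(A). Then the nullspace of PHP equals the range of Aᵀ, which equals the orthogonal complement of N(A). Consequently PHP is singular (when m ≥ 1), but for any two minimizers s⁰₁, s⁰₂ of the reduced quadratic (1/2)(s⁰)ᵀ(PHP)s⁰ + (P(g+Hs_c))ᵀs⁰ one has P s⁰₁ = P s⁰₂. -/

import Mathlib

open Matrix

lemma isUnit_of_rank_eq {m : ℕ} (B : Matrix (Fin m) (Fin m) ℝ) (h : B.rank = m) :
    IsUnit B := by
  rw [← Matrix.mulVec_surjective_iff_isUnit]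
  have : LinearMap.range B.mulVecLin = ⊤ := by
    apply Submodule.eq_top_of_finrank_eq
    rw [← Matrix.rank, h]
    simp
  intro y
  have := this ▸ Submodule.mem_top (x := y) (R := ℝ)
  obtain ⟨x, hx⟩ := this
  exact ⟨x, hx⟩

lemma quad_min_grad_zero {n : ℕ} (M : Matrix (Fin n) (Fin n) ℝ) (hM : Mᵀ = M)
    (b s : Fin n → ℝ)
    (hmin : ∀ s0 : Fin n → ℝ,
      (1 / 2) * (s ⬝ᵥ (M *ᵥ s)) + b ⬝ᵥ s ≤ (1 / 2) * (s0 ⬝ᵥ (M *ᵥ s0)) + b ⬝ᵥ s0) :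
    M *ᵥ s + b = 0 := by
  set d : Fin n → ℝ := M *ᵥ s + b with hd
  set c : ℝ := d ⬝ᵥ d with hc
  set a : ℝ := (1 / 2) * (d ⬝ᵥ (M *ᵥ d)) with ha
  have hsym : s ⬝ᵥ (M *ᵥ d) = d ⬝ᵥ (M *ᵥ s) := by
    rw [Matrix.dotProduct_mulVec, ← Matrix.mulVec_transpose, hM, dotProduct_comm]
  have expand : ∀ t : ℝ,
      (1 / 2) * ((s + t • d) ⬝ᵥ (M *ᵥ (s + t • d))) + b ⬝ᵥ (s + t • d)
        = ((1 / 2) * (s ⬝ᵥ (M *ᵥ s)) + b ⬝ᵥ s) + t * c + t ^ 2 * a := by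
    intro t
    have hbd : b ⬝ᵥ d = c - d ⬝ᵥ (M *ᵥ s) := by
      rw [hc, hd]
      simp only [dotProduct_add, add_dotProduct]
      rw [dotProduct_comm b (M *ᵥ s)]
      ring
    simp only [Matrix.mulVec_add, Matrix.mulVec_smul, dotProduct_add,
      add_dotProduct, dotProduct_smul, smul_dotProduct, smul_eq_mul,
      hsym, hbd, ha]
    ring
  have key : ∀ t : ℝ, 0 ≤ t * c + t ^ 2 * a := by
    intro t
    have := hmin (s + t • d)
    rw [expand t] at this
    linarith
  have hc0 : 0 ≤ c := by
    rw [hc]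
    exact Finset.sum_nonneg fun i _ => mul_self_nonneg (d i)
  -- show c ≤ 0
  have hcle : c ≤ 0 := by
    by_contra hpos
    push_neg at hpos
    set t : ℝ := -(c / (2 * (|a| + 1))) with ht
    have hden : (0:ℝ) < 2 * (|a| + 1) := by positivity
    have h1 := key t
    have htneg : t < 0 := by
      rw [ht]
      have : 0 < c / (2 * (|a| + 1)) := div_pos hpos hden
      linarith
    -- t * c + t^2 * a = t * (c + t * a)
    have hta : |t * a| ≤ |t| * (|a| + 1) := by
      rw [abs_mul]
      have : 0 ≤ |t| := abs_nonneg t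
      nlinarith [abs_nonneg a]
    have htabs : |t| = c / (2 * (|a| + 1)) := by
      rw [ht, abs_neg, abs_of_pos (div_pos hpos hden)]
    have h2 : |t * a| ≤ c / 2 := by
      rw [htabs] at hta
      calc |t * a| ≤ c / (2 * (|a| + 1)) * (|a| + 1) := hta
        _ = c / 2 := by field_simp
    have h3 : 0 < c + t * a := by
      have := neg_abs_le (t * a)
      linarith
    have h4 : t * (c + t * a) < 0 := mul_neg_of_neg_of_pos htneg h3
    have : t * c + t ^ 2 * a = t * (c + t * a) := by ring
    linarith
  have : c = 0 := le_antisymm hcle hc0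
  have hd0 : d = 0 := by
    rwa [hc, dotProduct_self_eq_zero] at this
  exact hd0

lemma dot_shift {k l : ℕ} (M : Matrix (Fin k) (Fin l) ℝ) (x : Fin k → ℝ) (y : Fin l → ℝ) :
    (Mᵀ *ᵥ x) ⬝ᵥ y = x ⬝ᵥ (M *ᵥ y) := by
  rw [Matrix.mulVec_transpose, ← Matrix.dotProduct_mulVec]

/-- the nullspace of `PHP` equals the range of `Aᵀ`, which equals the
orthogonal complement of `N(A)`; hence `PHP` is singular when `m ≥ 1`, but any two
minimizers of the reduced quadratic give the same projected step `P s⁰`. -/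
theorem php_nullspace_and_uniqueness {m n : ℕ} (hm : 1 ≤ m)
    (A : Matrix (Fin m) (Fin n) ℝ) (hrank : A.rank = m)
    (H : Matrix (Fin n) (Fin n) ℝ) (hH : H.IsSymm)
    (hpd : ∀ v : Fin n → ℝ, v ≠ 0 → A *ᵥ v = 0 → 0 < v ⬝ᵥ (H *ᵥ v))
    (g sc : Fin n → ℝ) :
    let P : Matrix (Fin n) (Fin n) ℝ := 1 - Aᵀ * (A * Aᵀ)⁻¹ * A
    let qr : (Fin n → ℝ) → ℝ := fun s0 =>
      (1 / 2) * (s0 ⬝ᵥ ((P * H * P) *ᵥ s0)) + (P *ᵥ (g + H *ᵥ sc)) ⬝ᵥ s0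
    (∀ v : Fin n → ℝ, (P * H * P) *ᵥ v = 0 ↔ ∃ w : Fin m → ℝ, v = Aᵀ *ᵥ w) ∧
    (∀ v : Fin n → ℝ, (∃ w : Fin m → ℝ, v = Aᵀ *ᵥ w) ↔
        ∀ u : Fin n → ℝ, A *ᵥ u = 0 → v ⬝ᵥ u = 0) ∧
    (∃ v : Fin n → ℝ, v ≠ 0 ∧ (P * H * P) *ᵥ v = 0) ∧
    (∀ s1 s2 : Fin n → ℝ, (∀ s0 : Fin n → ℝ, qr s1 ≤ qr s0) →
        (∀ s0 : Fin n → ℝ, qr s2 ≤ qr s0) → P *ᵥ s1 = P *ᵥ s2) := by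
  intro P qr
  -- invertibility of A * Aᵀ
  have hAAT : IsUnit (A * Aᵀ) := by
    apply isUnit_of_rank_eq
    rw [Matrix.rank_self_mul_transpose, hrank]
  have hdet : IsUnit (A * Aᵀ).det := (Matrix.isUnit_iff_isUnit_det _).mp hAAT
  have hinv : (A * Aᵀ)⁻¹ * (A * Aᵀ) = 1 := Matrix.nonsing_inv_mul _ hdet
  have hinv' : (A * Aᵀ) * (A * Aᵀ)⁻¹ = 1 := Matrix.mul_nonsing_inv _ hdet
  -- basic projector identities
  have hPA : P * Aᵀ = 0 := by
    show (1 - Aᵀ * (A * Aᵀ)⁻¹ * A) * Aᵀ = 0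
    have h : Aᵀ * (A * Aᵀ)⁻¹ * A * Aᵀ = Aᵀ := by
      rw [Matrix.mul_assoc (Aᵀ * (A * Aᵀ)⁻¹) A Aᵀ, Matrix.mul_assoc Aᵀ (A * Aᵀ)⁻¹ (A * Aᵀ),
        hinv, Matrix.mul_one]
    rw [Matrix.sub_mul, Matrix.one_mul, h, sub_self]
  have hAP : A * P = 0 := by
    show A * (1 - Aᵀ * (A * Aᵀ)⁻¹ * A) = 0
    have h : A * (Aᵀ * (A * Aᵀ)⁻¹ * A) = A := by
      rw [← Matrix.mul_assoc A (Aᵀ * (A * Aᵀ)⁻¹) A, ← Matrix.mul_assoc A Aᵀ (A * Aᵀ)⁻¹, hinv',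
        Matrix.one_mul]
    rw [Matrix.mul_sub, Matrix.mul_one, h, sub_self]
  have hinvsym : ((A * Aᵀ)⁻¹)ᵀ = (A * Aᵀ)⁻¹ := by
    rw [Matrix.transpose_nonsing_inv]
    congr 1
    rw [Matrix.transpose_mul, Matrix.transpose_transpose]
  have hPsym : Pᵀ = P := by
    show (1 - Aᵀ * (A * Aᵀ)⁻¹ * A)ᵀ = _
    rw [Matrix.transpose_sub, Matrix.transpose_one, Matrix.transpose_mul, Matrix.transpose_mul,
      Matrix.transpose_transpose, hinvsym, ← Matrix.mul_assoc Aᵀ (A * Aᵀ)⁻¹ A]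
  have hrepr : ∀ v : Fin n → ℝ, P *ᵥ v = 0 → v = Aᵀ *ᵥ (((A * Aᵀ)⁻¹ * A) *ᵥ v) := by
    intro v hv
    have h1 : v - (Aᵀ * (A * Aᵀ)⁻¹ * A) *ᵥ v = 0 := by
      have h := hv
      show _
      rw [show P = 1 - Aᵀ * (A * Aᵀ)⁻¹ * A from rfl, Matrix.sub_mulVec,
        Matrix.one_mulVec] at h
      exact h
    have h2 : v = (Aᵀ * ((A * Aᵀ)⁻¹ * A)) *ᵥ v := by
      rw [← Matrix.mul_assoc]; exact (sub_eq_zero.mp h1)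
    rw [Matrix.mulVec_mulVec]    -- adjust direction if needed
    exact h2
  -- backward direction of part 1: range(Aᵀ) ⊆ null(PHP)
  have hback : ∀ w : Fin m → ℝ, (P * H * P) *ᵥ (Aᵀ *ᵥ w) = 0 := by
    intro w
    rw [Matrix.mulVec_mulVec, Matrix.mul_assoc (P * H) P Aᵀ, hPA, Matrix.mul_zero,
      Matrix.zero_mulVec]
  -- forward direction of part 1
  have hfwd : ∀ v : Fin n → ℝ, (P * H * P) *ᵥ v = 0 → ∃ w : Fin m → ℝ, v = Aᵀ *ᵥ w := by
    intro v hv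
    have hAu : A *ᵥ (P *ᵥ v) = 0 := by
      rw [Matrix.mulVec_mulVec, hAP, Matrix.zero_mulVec]
    have hquad : (P *ᵥ v) ⬝ᵥ (H *ᵥ (P *ᵥ v)) = 0 := by
      have e := dot_shift P v (H *ᵥ (P *ᵥ v))
      rw [hPsym] at e
      rw [e, Matrix.mulVec_mulVec, Matrix.mulVec_mulVec, hv, dotProduct_zero]
    have hu0 : P *ᵥ v = 0 := by
      by_contra h
      exact absurd hquad (ne_of_gt (hpd _ h hAu))
    exact ⟨((A * Aᵀ)⁻¹ * A) *ᵥ v, hrepr v hu0⟩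
  refine ⟨fun v => ⟨hfwd v, fun ⟨w, hw⟩ => hw ▸ hback w⟩, ?_, ?_, ?_⟩
  · -- part 2
    intro v
    constructor
    · rintro ⟨w, rfl⟩ u hAu
      rw [dot_shift, hAu, dotProduct_zero]
    · intro hperp
      have hu : A *ᵥ (P *ᵥ v) = 0 := by
        rw [Matrix.mulVec_mulVec, hAP, Matrix.zero_mulVec]
      have h1 : v ⬝ᵥ (P *ᵥ v) = 0 := hperp _ hu
      have h2 : (P *ᵥ v) ⬝ᵥ (P *ᵥ v) = 0 := by
        have hPP : P * P = P := by
          show (1 - Aᵀ * (A * Aᵀ)⁻¹ * A) * P = P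
          rw [Matrix.sub_mul, Matrix.one_mul, Matrix.mul_assoc (Aᵀ * (A * Aᵀ)⁻¹) A P, hAP,
            Matrix.mul_zero, sub_zero]
        have e := dot_shift P v (P *ᵥ v)
        rw [hPsym] at e
        rw [e, Matrix.mulVec_mulVec, hPP]
        exact h1
      have hP0 : P *ᵥ v = 0 := dotProduct_self_eq_zero.mp h2
      exact ⟨((A * Aᵀ)⁻¹ * A) *ᵥ v, hrepr v hP0⟩
  · -- part 3: singularity
    have hA0 : A ≠ 0 := by
      intro h
      rw [h, Matrix.rank_zero] at hrank
      omega
    obtain ⟨i, hi⟩ : ∃ i, A i ≠ 0 := by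
      by_contra h
      push_neg at h
      exact hA0 (by ext i j; rw [h i]; rfl)
    refine ⟨Aᵀ *ᵥ Pi.single i 1, ?_, hback _⟩
    intro h
    apply hi
    ext j
    have := congrFun h j
    simp [Matrix.mulVec, dotProduct, Pi.single_apply] at this
    simpa using this
  · -- part 4: uniqueness of projected minimizer
    intro s1 s2 h1 h2
    have hMsym : (P * H * P)ᵀ = P * H * P := by
      rw [Matrix.transpose_mul, Matrix.transpose_mul, hPsym, hH.eq, Matrix.mul_assoc]
    have hg1 : (P * H * P) *ᵥ s1 + P *ᵥ (g + H *ᵥ sc) = 0 :=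
      quad_min_grad_zero _ hMsym _ s1 h1
    have hg2 : (P * H * P) *ᵥ s2 + P *ᵥ (g + H *ᵥ sc) = 0 :=
      quad_min_grad_zero _ hMsym _ s2 h2
    have hdiff : (P * H * P) *ᵥ (s1 - s2) = 0 := by
      rw [Matrix.mulVec_sub]
      have : (P * H * P) *ᵥ s1 = (P * H * P) *ᵥ s2 := by
        have := sub_eq_zero.mpr (hg1.trans hg2.symm)
        simpa [add_sub_add_right_eq_sub, sub_eq_zero] using this
      rw [this, sub_self]
    obtain ⟨w, hw⟩ := hfwd _ hdiff
    have : P *ᵥ (s1 - s2) = 0 := by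
      rw [hw, Matrix.mulVec_mulVec, hPA, Matrix.zero_mulVec]
    rw [Matrix.mulVec_sub, sub_eq_zero] at this
    exact this
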